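/- Let S, T be selfadjoint regular operators in a Hilbert C*-module E over A satisfying Assumption: there is a core 𝓔 for T such that (S − iμ)^{-1}(𝓔) ⊆ dom(S) ∩ dom(T), T(S − iμ)^{-1}(𝓔) ⊆ dom(S), and [S,T](S − iμ)^{-1} : 𝓔 → E extends to a bounded adjointable operator X_μ for all real μ ≠ 0. Then there exists C > 0 such that for all ξ ∈ dom([S,T]) one has ±i⟨[S,T]ξ, ξ⟩ ≤ (1/2)⟨Sξ, Sξ⟩ + C⟨ξ,ξ⟩ as selfadjoint elements of A. -/

import Mathlib

open scoped ComplexOrder RightActions InnerProductSpace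
open CStarModule

noncomputable section

/-- The class `CStarModule` as it stood in Mathlib of December 2024 (right `A`-action through
`Aᵐᵒᵖ`); Mathlib's `CStarModule` now uses a left action `SMul A E` with other axioms. -/
class RightCStarModule (A : outParam <| Type*) (E : Type*) [NonUnitalSemiring A] [StarRing A]
    [Module ℂ A] [AddCommGroup E] [Module ℂ E] [PartialOrder A] [SMul Aᵐᵒᵖ E] [Norm A] [Norm E]
    extends Inner A E where
  inner_add_right {x} {y} {z} : inner x (y + z) = inner x y + inner x z
  inner_self_nonneg {x} : 0 ≤ inner x x
  inner_self {x} : inner x x = 0 ↔ x = 0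
  inner_op_smul_right {a : A} {x y : E} : inner x (y <• a) = inner x y * a
  inner_smul_right_complex {z : ℂ} {x} {y} : inner x (z • y) = z • inner x y
  star_inner x y : star (inner x y) = inner y x
  norm_eq_sqrt_norm_inner_self x : ‖x‖ = √‖inner x x‖

/-- An unbounded operator in a Hilbert C⋆-module `E`: a `ℂ`-linear map defined on a
`ℂ`-submodule of `E`. -/
structure UnboundedOperator (E : Type*) [NormedAddCommGroup E] [Module ℂ E] where
  dom : Submodule ℂ E
  toFun : dom →ₗ[ℂ] E

namespace UnboundedOperator

variable {A E : Type*} [CStarAlgebra A] [PartialOrder A] [StarOrderedRing A]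
  [NormedAddCommGroup E] [Module ℂ E] [SMul Aᵐᵒᵖ E] [RightCStarModule A E]

/-- `y` and `z` satisfy the adjoint relation for `T`: `⟪Tx, y⟫ = ⟪x, z⟫` for all `x ∈ dom T`. -/
def AdjRel (T : UnboundedOperator E) (y z : E) : Prop :=
  ∀ x : T.dom, ⟪T.toFun x, y⟫_A = ⟪(x : E), z⟫_A

/-- The domain of the adjoint of `T`. -/
def adjDom (T : UnboundedOperator E) : Set E := {y | ∃ z, T.AdjRel (A := A) y z}

/-- `T` is semiregular: both `T` and its adjoint are densely defined. -/
def Semiregular (T : UnboundedOperator E) : Prop :=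
  Dense (T.dom : Set E) ∧ Dense (T.adjDom (A := A))

/-- The graph of `T` as a subset of `E × E`. -/
def graph (T : UnboundedOperator E) : Set (E × E) :=
  {p | ∃ x : T.dom, p = ((x : E), T.toFun x)}

/-- `T` is a closed operator. -/
def IsClosedOp (T : UnboundedOperator E) : Prop := IsClosed T.graph

/-- `S` is the adjoint of `T`. -/
def IsAdjointOf (S T : UnboundedOperator E) : Prop :=
  (S.dom : Set E) = T.adjDom (A := A) ∧ ∀ y : S.dom, T.AdjRel (A := A) (y : E) (S.toFun y)

/-- `T` is symmetric. -/
def Symmetric (T : UnboundedOperator E) : Prop :=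
  ∀ x y : T.dom, ⟪T.toFun x, (y : E)⟫_A = ⟪(x : E), T.toFun y⟫_A

/-- `T` is selfadjoint: it is its own adjoint. -/
def SelfAdjointOp (T : UnboundedOperator E) : Prop := IsAdjointOf (A := A) T T

/-- The range of `I + S ∘ T` (for `S` the adjoint of `T` this is the range of `I + T⋆T`). -/
def ranIdAddMul (S T : UnboundedOperator E) : Set E :=
  {y | ∃ (x : T.dom) (hx : T.toFun x ∈ S.dom), y = (x : E) + S.toFun ⟨T.toFun x, hx⟩}

/-- `T` is regular: it is closed, semiregular, and `I + T⋆T` has dense range. -/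
def Regular (T : UnboundedOperator E) : Prop :=
  T.IsClosedOp ∧ T.Semiregular (A := A) ∧
    ∀ S : UnboundedOperator E, IsAdjointOf (A := A) S T → Dense (ranIdAddMul S T)

/-- `Tc` is the closure of `T`: its graph is the closure of the graph of `T`. -/
def IsClosureOf (Tc T : UnboundedOperator E) : Prop :=
  Tc.graph = closure T.graph

end UnboundedOperator

namespace RCSM

variable {A E : Type*} [CStarAlgebra A] [PartialOrder A] [StarOrderedRing A]
  [NormedAddCommGroup E] [Module ℂ E] [SMul Aᵐᵒᵖ E] [RightCStarModule A E]

@[simp] lemma inner_add_right {x y z : E} : ⟪x, y + z⟫_A = ⟪x, y⟫_A + ⟪x, z⟫_A :=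
  RightCStarModule.inner_add_right
@[simp] lemma star_inner (x y : E) : star ⟪x, y⟫_A = ⟪y, x⟫_A := RightCStarModule.star_inner x y
@[simp] lemma inner_op_smul_right {a : A} {x y : E} : ⟪x, y <• a⟫_A = ⟪x, y⟫_A * a :=
  RightCStarModule.inner_op_smul_right
@[simp] lemma inner_smul_right_complex {z : ℂ} {x y : E} : ⟪x, z • y⟫_A = z • ⟪x, y⟫_A :=
  RightCStarModule.inner_smul_right_complex
lemma inner_self_nonneg {x : E} : 0 ≤ ⟪x, x⟫_A := RightCStarModule.inner_self_nonneg
lemma inner_self {x : E} : ⟪x, x⟫_A = 0 ↔ x = 0 := RightCStarModule.inner_self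
lemma norm_eq_sqrt_norm_inner_self (x : E) : ‖x‖ = √‖⟪x, x⟫_A‖ :=
  RightCStarModule.norm_eq_sqrt_norm_inner_self x

@[simp] lemma inner_add_left {x y z : E} : ⟪x + y, z⟫_A = ⟪x, z⟫_A + ⟪y, z⟫_A := by
  rw [← star_star (r := ⟪x + y, z⟫_A)]
  simp only [inner_add_right, star_add, star_inner]

@[simp] lemma inner_op_smul_left {a : A} {x y : E} : ⟪x <• a, y⟫_A = star a * ⟪x, y⟫_A := by
  rw [← star_inner]; simp

@[simp] lemma inner_smul_left_complex {z : ℂ} {x y : E} : ⟪z • x, y⟫_A = star z • ⟪x, y⟫_A := by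
  rw [← star_inner]; simp

@[simp] lemma inner_smul_left_real {z : ℝ} {x y : E} : ⟪z • x, y⟫_A = z • ⟪x, y⟫_A := by
  have h₁ : z • x = (z : ℂ) • x := by simp
  rw [h₁, ← star_inner, inner_smul_right_complex]
  simp

@[simp] lemma inner_smul_right_real {z : ℝ} {x y : E} : ⟪x, z • y⟫_A = z • ⟪x, y⟫_A := by
  have h₁ : z • y = (z : ℂ) • y := by simp
  rw [h₁, ← star_inner, inner_smul_left_complex]
  simp

/-- The inner product as a sesquilinear map. -/
def innerₛₗ : E →ₗ⋆[ℂ] E →ₗ[ℂ] A where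
  toFun x := { toFun := fun y => ⟪x, y⟫_A
               map_add' := fun z y => by simp
               map_smul' := fun z y => by simp }
  map_add' z y := by ext; simp
  map_smul' z y := by ext; simp

lemma innerₛₗ_apply {x y : E} : innerₛₗ (A := A) x y = ⟪x, y⟫_A := rfl

@[simp] lemma inner_zero_right {x : E} : ⟪x, 0⟫_A = 0 := by simp [← innerₛₗ_apply]
@[simp] lemma inner_zero_left {x : E} : ⟪0, x⟫_A = 0 := by simp [← innerₛₗ_apply]
@[simp] lemma inner_neg_right {x y : E} : ⟪x, -y⟫_A = -⟪x, y⟫_A := by simp [← innerₛₗ_apply]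
@[simp] lemma inner_neg_left {x y : E} : ⟪-x, y⟫_A = -⟪x, y⟫_A := by simp [← innerₛₗ_apply]
@[simp] lemma inner_sub_right {x y z : E} : ⟪x, y - z⟫_A = ⟪x, y⟫_A - ⟪x, z⟫_A := by
  simp [← innerₛₗ_apply]
@[simp] lemma inner_sub_left {x y z : E} : ⟪x - y, z⟫_A = ⟪x, z⟫_A - ⟪y, z⟫_A := by
  simp [← innerₛₗ_apply]

lemma norm_sq_eq {x : E} : ‖x‖ ^ 2 = ‖⟪x, x⟫_A‖ := by
  rw [norm_eq_sqrt_norm_inner_self (A := A), Real.sq_sqrt (norm_nonneg _)]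

lemma inner_mul_inner_swap_le {x y : E} : ⟪y, x⟫_A * ⟪x, y⟫_A ≤ ‖x‖ ^ 2 • ⟪y, y⟫_A := by
  rcases eq_or_ne x 0 with h | h
  · simp [h]
  · have h₁ : ∀ (a : A),
        (0 : A) ≤ ‖x‖ ^ 2 • (star a * a) - ‖x‖ ^ 2 • (star a * ⟪x, y⟫_A)
                  - ‖x‖ ^ 2 • (⟪y, x⟫_A * a) + ‖x‖ ^ 2 • (‖x‖ ^ 2 • ⟪y, y⟫_A) := fun a => by
      calc (0 : A) ≤ ⟪x <• a - ‖x‖ ^ 2 • y, x <• a - ‖x‖ ^ 2 • y⟫_A := by exact inner_self_nonneg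
            _ = star a * ⟪x, x⟫_A * a - ‖x‖ ^ 2 • (star a * ⟪x, y⟫_A)
                  - ‖x‖ ^ 2 • (⟪y, x⟫_A * a) + ‖x‖ ^ 2 • (‖x‖ ^ 2 • ⟪y, y⟫_A) := by
                      simp only [inner_sub_right, inner_op_smul_right, inner_sub_left,
                        inner_op_smul_left, inner_smul_left_real, mul_sub, mul_smul_comm,
                        inner_smul_right_real, smul_sub, sub_mul, mul_assoc, smul_mul_assoc]
                      abel
            _ ≤ ‖x‖ ^ 2 • (star a * a) - ‖x‖ ^ 2 • (star a * ⟪x, y⟫_A)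
                  - ‖x‖ ^ 2 • (⟪y, x⟫_A * a) + ‖x‖ ^ 2 • (‖x‖ ^ 2 • ⟪y, y⟫_A) := by
                      gcongr
                      calc _ ≤ ‖⟪x, x⟫_A‖ • (star a * a) :=
                          CStarAlgebra.star_left_conjugate_le_norm_smul (star_inner x x)
                        _ = ‖x‖ ^ 2 • (star a * a) := by rw [norm_sq_eq (A := A)]
    specialize h₁ ⟪x, y⟫_A
    simp only [star_inner, sub_self, zero_sub, le_neg_add_iff_add_le, add_zero] at h₁
    rwa [smul_le_smul_iff_of_pos_left (pow_pos (norm_pos_iff.mpr h) _)] at h₁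

variable (E) in
lemma norm_inner_le {x y : E} : ‖⟪x, y⟫_A‖ ≤ ‖x‖ * ‖y‖ := by
  have := calc ‖⟪x, y⟫_A‖ ^ 2 = ‖⟪y, x⟫_A * ⟪x, y⟫_A‖ := by
                rw [← star_inner x y, CStarRing.norm_star_mul_self, pow_two]
    _ ≤ ‖‖x‖ ^ 2 • ⟪y, y⟫_A‖ := by
                refine CStarAlgebra.norm_le_norm_of_nonneg_of_le ?_ inner_mul_inner_swap_le
                rw [← star_inner x y]
                exact star_mul_self_nonneg ⟪x, y⟫_A
    _ = ‖x‖ ^ 2 * ‖⟪y, y⟫_A‖ := by simp [norm_smul]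
    _ = ‖x‖ ^ 2 * ‖y‖ ^ 2 := by rw [norm_sq_eq (A := A) (x := y)]
    _ = (‖x‖ * ‖y‖) ^ 2 := by simp only [mul_pow]
  refine (pow_le_pow_iff_left₀ (norm_nonneg ⟪x, y⟫_A) ?_ (by simp)).mp this
  exact mul_nonneg (norm_nonneg _) (norm_nonneg _)

/-- The normed space core of a Hilbert C⋆-module. -/
lemma normedSpaceCore {A : Type*} [CStarAlgebra A] [PartialOrder A] [StarOrderedRing A]
    [SMul Aᵐᵒᵖ E] [RightCStarModule A E] : NormedSpace.Core ℂ E where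
  norm_nonneg _ := norm_nonneg _
  norm_eq_zero_iff x := norm_eq_zero
  norm_smul c x := by
    rw [norm_eq_sqrt_norm_inner_self (A := A), norm_eq_sqrt_norm_inner_self (A := A) x,
      inner_smul_left_complex, inner_smul_right_complex, smul_smul, norm_smul, norm_mul,
      norm_star, Real.sqrt_mul (by positivity), Real.sqrt_mul_self (norm_nonneg _)]
  norm_triangle x y := norm_add_le x y

end RCSM


section AuxCE

variable {A E : Type*} [CStarAlgebra A] [PartialOrder A] [StarOrderedRing A]
  [NormedAddCommGroup E] [Module ℂ E] [SMul Aᵐᵒᵖ E] [RightCStarModule A E]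

private lemma algebraMap_mono_ce {r s : ℝ} (h : r ≤ s) :
    algebraMap ℝ A r ≤ algebraMap ℝ A s := by
  rw [← sub_nonneg, ← map_sub, Algebra.algebraMap_eq_smul_one]
  exact smul_nonneg (by linarith) zero_le_one

private lemma smul_le_smul_ce {x y : A} (h : x ≤ y) {c : ℝ} (hc : 0 ≤ c) :
    c • x ≤ c • y := by
  rw [← sub_nonneg, ← smul_sub]
  exact smul_nonneg hc (sub_nonneg.mpr h)

private lemma inner_eq_zero_of_forall_ce {u : E} (h : ∀ w : E, ⟪u, w⟫_A = 0) : u = 0 :=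
  RCSM.inner_self.mp (h u)

private lemma continuous_inner_left_ce (w : E) : Continuous fun x : E => ⟪x, w⟫_A := by
  rcases eq_or_ne w 0 with rfl | hw
  · simpa using continuous_const
  · refine (LipschitzWith.of_dist_le_mul (K := ⟨‖w‖, norm_nonneg w⟩) fun x y => ?_).continuous
    rw [dist_eq_norm, dist_eq_norm, ← RCSM.inner_sub_left]
    calc ‖⟪x - y, w⟫_A‖ ≤ ‖x - y‖ * ‖w‖ := RCSM.norm_inner_le E
      _ = ‖w‖ * ‖x - y‖ := by ring
      _ = _ := rfl

private lemma continuous_inner_right_ce (w : E) : Continuous fun x : E => ⟪w, x⟫_A := by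
  rcases eq_or_ne w 0 with rfl | hw
  · simpa using continuous_const
  · refine (LipschitzWith.of_dist_le_mul (K := ⟨‖w‖, norm_nonneg w⟩) fun x y => ?_).continuous
    rw [dist_eq_norm, dist_eq_norm, ← RCSM.inner_sub_right]
    calc ‖⟪w, x - y⟫_A‖ ≤ ‖w‖ * ‖x - y‖ := RCSM.norm_inner_le E
      _ = _ := rfl

/-- Paschke-type inequality: a bounded `A`-linear map on a Hilbert C⋆-module satisfies
`⟪Gx, Gx⟫ ≤ c² ⟪x, x⟫`. -/
private theorem paschke_ce (G : E → E) (c : ℝ) (hc : 0 ≤ c) (hG : ∀ y : E, ‖G y‖ ≤ c * ‖y‖)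
    (hGsmul : ∀ (a : A) (y : E), G (y <• a) = G y <• a) (x : E) :
    ⟪G x, G x⟫_A ≤ (c^2 : ℝ) • ⟪x, x⟫_A := by
  rcases subsingleton_or_nontrivial A with hA|hA
  · exact le_of_eq (Subsingleton.elim _ _)
  set a : A := ⟪x, x⟫_A with ha_def
  have ha : 0 ≤ a := RCSM.inner_self_nonneg
  have hsa : IsSelfAdjoint a := IsSelfAdjoint.of_nonneg ha
  have key : ∀ ε : ℝ, 0 < ε → ⟪G x, G x⟫_A ≤ (c^2 : ℝ) • a + (c^2 * ε) • (1:A) := by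
    intro ε hε
    have hspec : spectrum ℝ a ⊆ Set.Ici 0 := fun t ht => spectrum_nonneg_of_nonneg ha ht
    have hpos : ∀ t ∈ spectrum ℝ a, (0:ℝ) < Real.sqrt (t+ε) := by
      intro t ht
      have h1 : (0:ℝ) ≤ t := hspec ht
      exact Real.sqrt_pos.mpr (by linarith)
    have hkc : ContinuousOn (fun t : ℝ => Real.sqrt (t+ε)) (spectrum ℝ a) :=
      (Real.continuous_sqrt.comp (continuous_id.add continuous_const)).continuousOn
    have hfc : ContinuousOn (fun t : ℝ => (Real.sqrt (t+ε))⁻¹) (spectrum ℝ a) :=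
      hkc.inv₀ (fun t ht => (hpos t ht).ne')
    set h : A := cfc (fun t : ℝ => (Real.sqrt (t+ε))⁻¹) a with hh_def
    set k : A := cfc (fun t : ℝ => Real.sqrt (t+ε)) a with hk_def
    have hsa_h : IsSelfAdjoint h := cfc_predicate _ a
    have hkh : k * h = 1 := by
      rw [hk_def, hh_def, ← cfc_mul _ _ a hkc hfc,
        cfc_congr (g := fun _ : ℝ => (1:ℝ)) (fun t ht => mul_inv_cancel₀ (hpos t ht).ne')]
      exact cfc_const_one ℝ a
    have hhk : h * k = 1 := by
      rw [hk_def, hh_def, ← cfc_mul _ _ a hfc hkc,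
        cfc_congr (g := fun _ : ℝ => (1:ℝ)) (fun t ht => inv_mul_cancel₀ (hpos t ht).ne')]
      exact cfc_const_one ℝ a
    have hkk : k * k = a + ε • (1:A) := by
      rw [hk_def, ← cfc_mul _ _ a hkc hkc,
        cfc_congr (g := fun t : ℝ => t + ε) (fun t ht => Real.mul_self_sqrt (by
          have := hspec ht; simp only [Set.mem_Ici] at this; linarith)),
        cfc_add a (fun t : ℝ => t) (fun _ : ℝ => ε) (continuous_id.continuousOn)
          (continuous_const.continuousOn),
        cfc_id' ℝ a, cfc_const ε a, Algebra.algebraMap_eq_smul_one]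
    have h_hah_le_one : h * a * h ≤ 1 := by
      have h1 : a ≤ k * k := by
        rw [hkk]
        have h0 : (0:A) ≤ ε • (1:A) := smul_nonneg hε.le zero_le_one
        calc a = a + 0 := by rw [add_zero]
          _ ≤ a + ε • (1:A) := add_le_add_right h0 a
      calc h * a * h = star h * a * h := by rw [hsa_h.star_eq]
        _ ≤ star h * (k * k) * h := star_left_conjugate_le_conjugate h1 h
        _ = (h * k) * (k * h) := by rw [hsa_h.star_eq]; simp only [mul_assoc]
        _ = 1 := by rw [hhk, hkh, one_mul]
    have h_hah_nonneg : (0:A) ≤ h * a * h := by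
      have := star_left_conjugate_nonneg ha h
      rwa [hsa_h.star_eq] at this
    have hy_inner : ⟪x <• h, x <• h⟫_A = h * a * h := by
      simp [mul_assoc, hsa_h.star_eq, ha_def]
    have hy_norm : ‖x <• h‖ ≤ 1 := by
      have h2 : ‖x <• h‖ ^ 2 ≤ 1 := by
        rw [RCSM.norm_sq_eq (A := A), hy_inner]
        calc ‖h * a * h‖ ≤ ‖(1:A)‖ :=
              CStarAlgebra.norm_le_norm_of_nonneg_of_le h_hah_nonneg h_hah_le_one
          _ = 1 := norm_one
      nlinarith [norm_nonneg (x <• h), sq_nonneg (‖x <• h‖ - 1)]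
    have hGy : G (x <• h) = G x <• h := hGsmul h x
    have hq : h * ⟪G x, G x⟫_A * h ≤ algebraMap ℝ A (c^2) := by
      have h3 : ⟪G (x <• h), G (x <• h)⟫_A ≤ algebraMap ℝ A ‖⟪G (x <• h), G (x <• h)⟫_A‖ :=
        IsSelfAdjoint.le_algebraMap_norm_self (ha := RCSM.star_inner _ _)
      have h4 : ‖⟪G (x <• h), G (x <• h)⟫_A‖ ≤ c^2 := by
        rw [← RCSM.norm_sq_eq (A := A)]
        have h5 := hG (x <• h)
        have h6 : ‖G (x <• h)‖ ≤ c := le_trans h5 (by nlinarith)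
        nlinarith [norm_nonneg (G (x <• h))]
      calc h * ⟪G x, G x⟫_A * h = ⟪G (x <• h), G (x <• h)⟫_A := by
            rw [hGy]; simp [mul_assoc, hsa_h.star_eq]
        _ ≤ algebraMap ℝ A ‖⟪G (x <• h), G (x <• h)⟫_A‖ := h3
        _ ≤ algebraMap ℝ A (c^2) := algebraMap_mono_ce h4
    have hfinal : ⟪G x, G x⟫_A ≤ (c^2:ℝ) • (k * k) := by
      have h7 := star_left_conjugate_le_conjugate hq k
      have hsa_k : IsSelfAdjoint k := cfc_predicate _ a
      rw [hsa_k.star_eq] at h7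
      have h8 : k * (h * ⟪G x, G x⟫_A * h) * k = ⟪G x, G x⟫_A := by
        calc k * (h * ⟪G x, G x⟫_A * h) * k
            = (k * h) * (⟪G x, G x⟫_A * (h * k)) := by simp only [mul_assoc]
          _ = ⟪G x, G x⟫_A := by rw [hkh, hhk, one_mul, mul_one]
      have h9 : k * algebraMap ℝ A (c^2) * k = (c^2:ℝ) • (k * k) := by
        rw [Algebra.algebraMap_eq_smul_one, mul_smul_comm, mul_one, smul_mul_assoc]
      rw [h8, h9] at h7
      exact h7
    rw [hkk] at hfinal
    calc ⟪G x, G x⟫_A ≤ (c^2:ℝ) • (a + ε • (1:A)) := hfinal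
      _ = (c^2:ℝ) • a + (c^2 * ε) • (1:A) := by rw [smul_add, smul_smul]
  have htend : Filter.Tendsto (fun n : ℕ => (c^2:ℝ) • a + (c^2 * (1/(n+1))) • (1:A))
      Filter.atTop (nhds ((c^2:ℝ) • a)) := by
    have h1 : Filter.Tendsto (fun n : ℕ => (1:ℝ)/(n+1)) Filter.atTop (nhds 0) :=
      tendsto_one_div_add_atTop_nhds_zero_nat
    have h2 : Continuous (fun r : ℝ => (c^2:ℝ) • a + (c^2 * r) • (1:A)) := by continuity
    have h3 := (h2.tendsto 0).comp h1
    simpa [Function.comp_def] using h3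
  refine ge_of_tendsto htend (Filter.Eventually.of_forall fun n => ?_)
  exact key (1/(n+1)) (by positivity)

end AuxCE

namespace UnboundedOperator

variable {A E : Type*} [CStarAlgebra A] [PartialOrder A] [StarOrderedRing A]
  [NormedAddCommGroup E] [Module ℂ E] [SMul Aᵐᵒᵖ E] [RightCStarModule A E]

/-- The standing assumption on the pair `(S, T)` of selfadjoint regular operators: there is a
core `𝓔` for `T` such that `(S − iμ)⁻¹ 𝓔 ⊆ dom S ∩ dom T`, `T (S − iμ)⁻¹ 𝓔 ⊆ dom S`, and the
commutator `[S, T] (S − iμ)⁻¹` defined on `𝓔` extends to a bounded adjointable operator `X_μ`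
on `E`, for every real `μ ≠ 0`. Here `res μ = (S − iμ)⁻¹` is the resolvent of `S`. -/
structure SumAssumption (S T : UnboundedOperator E) : Type _ where
  core : Submodule ℂ E
  core_sub : ∀ x ∈ core, x ∈ T.dom
  /-- `core` is a core for `T`: it is dense in `dom T` for the graph norm. -/
  core_dense : ∀ (x : T.dom) (ε : ℝ), 0 < ε → ∃ (y : E) (hy : y ∈ core),
    ‖(x : E) - y‖ ^ 2 + ‖T.toFun x - T.toFun ⟨y, core_sub y hy⟩‖ ^ 2 < ε
  /-- the resolvent `res μ = (S − iμ)⁻¹` of the selfadjoint regular operator `S` -/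
  res : ℝ → E →L[ℂ] E
  res_mem_S : ∀ (μ : ℝ), μ ≠ 0 → ∀ x : E, res μ x ∈ S.dom
  res_eq : ∀ (μ : ℝ) (hμ : μ ≠ 0) (x : E),
    S.toFun ⟨res μ x, res_mem_S μ hμ x⟩ - (Complex.I * (μ : ℂ)) • res μ x = x
  res_mem_T : ∀ (μ : ℝ) (hμ : μ ≠ 0), ∀ x ∈ core, res μ x ∈ T.dom
  Tres_mem_S : ∀ (μ : ℝ) (hμ : μ ≠ 0) (x : E) (hx : x ∈ core),
    T.toFun ⟨res μ x, res_mem_T μ hμ x hx⟩ ∈ S.dom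
  /-- `[S, T] (S − iμ)⁻¹`, defined on the core, extends to a bounded operator `X_μ` on `E`;
  here `T S (S − iμ)⁻¹ x = T x + iμ T (S − iμ)⁻¹ x` for `x` in the core. -/
  comm_bounded : ∀ (μ : ℝ) (hμ : μ ≠ 0), ∃ X : E →L[ℂ] E, ∀ (x : E) (hx : x ∈ core),
    X x = S.toFun ⟨T.toFun ⟨res μ x, res_mem_T μ hμ x hx⟩, Tres_mem_S μ hμ x hx⟩
      - T.toFun ⟨x, core_sub x hx⟩
      - (Complex.I * (μ : ℂ)) • T.toFun ⟨res μ x, res_mem_T μ hμ x hx⟩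


section AuxOp

variable {A E : Type*} [CStarAlgebra A] [PartialOrder A] [StarOrderedRing A]
  [NormedAddCommGroup E] [Module ℂ E] [SMul Aᵐᵒᵖ E] [RightCStarModule A E]

private lemma toFun_congr_ce (T : UnboundedOperator E) {x y : T.dom} (h : (x:E) = (y:E)) :
    T.toFun x = T.toFun y := by
  congr 1
  exact Subtype.ext h

private lemma cmplx_smul_real (r : ℝ) (x : A) : ((r:ℂ)) • x = r • x := by
  rw [← algebraMap_smul ℂ r x]
  norm_num

namespace SumAssumption

variable {S T : UnboundedOperator E} (assum : SumAssumption S T)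

private lemma inner_shift_expand (hSsa : S.SelfAdjointOp (A := A)) (μ : ℝ) {v : E}
    (hv : v ∈ S.dom) :
    ⟪S.toFun ⟨v,hv⟩ - (Complex.I*μ)•v, S.toFun ⟨v,hv⟩ - (Complex.I*μ)•v⟫_A
      = ⟪S.toFun ⟨v,hv⟩, S.toFun ⟨v,hv⟩⟫_A + ((μ:ℝ)^2) • ⟪v,v⟫_A := by
  have hsym : ⟪S.toFun ⟨v,hv⟩, v⟫_A = ⟪v, S.toFun ⟨v,hv⟩⟫_A := hSsa.2 ⟨v,hv⟩ ⟨v,hv⟩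
  rw [← cmplx_smul_real (μ^2)]
  simp only [RCSM.inner_sub_left, RCSM.inner_sub_right,
    RCSM.inner_smul_left_complex, RCSM.inner_smul_right_complex, hsym,
    star_mul', Complex.star_def, Complex.conj_I, Complex.conj_ofReal]
  push_cast
  match_scalars <;> ring_nf <;> simp [Complex.I_sq]

private lemma res_apply_shift (hSsa : S.SelfAdjointOp (A := A)) {μ : ℝ} (hμ : μ ≠ 0) {ξ : E}
    (hξ : ξ ∈ S.dom) :
    assum.res μ (S.toFun ⟨ξ, hξ⟩ - (Complex.I * μ) • ξ) = ξ := by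
  set x := S.toFun ⟨ξ, hξ⟩ - (Complex.I * μ) • ξ with hx_def
  have hvmem : assum.res μ x ∈ S.dom := assum.res_mem_S μ hμ x
  have hsub : assum.res μ x - ξ ∈ S.dom := sub_mem hvmem hξ
  have h1 : S.toFun ⟨assum.res μ x - ξ, hsub⟩
      = S.toFun ⟨assum.res μ x, hvmem⟩ - S.toFun ⟨ξ, hξ⟩ := by
    have h0 : (⟨assum.res μ x - ξ, hsub⟩ : S.dom) = ⟨assum.res μ x, hvmem⟩ - ⟨ξ, hξ⟩ :=
      Subtype.ext rfl
    rw [h0, map_sub]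
  have h2 : S.toFun ⟨assum.res μ x - ξ, hsub⟩ - (Complex.I*μ) • (assum.res μ x - ξ) = 0 := by
    have h3 := assum.res_eq μ hμ x
    rw [h1, smul_sub]
    calc S.toFun ⟨assum.res μ x, hvmem⟩ - S.toFun ⟨ξ, hξ⟩
          - ((Complex.I*μ) • assum.res μ x - (Complex.I*μ) • ξ)
        = (S.toFun ⟨assum.res μ x, hvmem⟩ - (Complex.I*μ) • assum.res μ x)
          - (S.toFun ⟨ξ, hξ⟩ - (Complex.I*μ) • ξ) := by abel
      _ = x - x := by rw [h3, ← hx_def]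
      _ = 0 := sub_self x
  have h4 : (0:A) = ⟪S.toFun ⟨assum.res μ x - ξ, hsub⟩ - (Complex.I*μ) • (assum.res μ x - ξ),
      S.toFun ⟨assum.res μ x - ξ, hsub⟩ - (Complex.I*μ) • (assum.res μ x - ξ)⟫_A := by
    rw [h2]; simp
  rw [inner_shift_expand hSsa μ hsub] at h4
  have h5 : ((μ:ℝ)^2) • ⟪assum.res μ x - ξ, assum.res μ x - ξ⟫_A ≤ 0 := by
    have h6 : (0:A) ≤ ⟪S.toFun ⟨assum.res μ x - ξ, hsub⟩,
        S.toFun ⟨assum.res μ x - ξ, hsub⟩⟫_A := RCSM.inner_self_nonneg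
    calc ((μ:ℝ)^2) • ⟪assum.res μ x - ξ, assum.res μ x - ξ⟫_A
        = -⟪S.toFun ⟨assum.res μ x - ξ, hsub⟩, S.toFun ⟨assum.res μ x - ξ, hsub⟩⟫_A := by
          exact eq_neg_of_add_eq_zero_left ((add_comm _ _).trans h4.symm)
      _ ≤ 0 := neg_nonpos_of_nonneg h6
  have h7 : ((μ:ℝ)^2) • ⟪assum.res μ x - ξ, assum.res μ x - ξ⟫_A = 0 :=
    le_antisymm h5 (smul_nonneg (sq_nonneg μ) RCSM.inner_self_nonneg)
  have h8 : ⟪assum.res μ x - ξ, assum.res μ x - ξ⟫_A = 0 := by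
    have hμ2 : ((μ:ℝ)^2) ≠ 0 := pow_ne_zero 2 hμ
    have := congrArg (fun z => (((μ:ℝ)^2)⁻¹ : ℝ) • z) h7
    simpa [smul_smul, inv_mul_cancel₀ hμ2] using this
  have h9 : assum.res μ x - ξ = 0 := RCSM.inner_self.mp h8
  have := sub_eq_zero.mp h9
  exact this

private lemma inner_res_adj (hSsa : S.SelfAdjointOp (A := A)) {μ : ℝ} (hμ : μ ≠ 0) (x y : E) :
    ⟪assum.res μ x, y⟫_A = ⟪x, assum.res (-μ) y⟫_A := by
  have hμ' : (-μ : ℝ) ≠ 0 := neg_ne_zero.mpr hμ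
  have hy := assum.res_eq (-μ) hμ' y
  have hsym : ∀ (u : E) (hu : u ∈ S.dom) (w : E) (hw : w ∈ S.dom),
      ⟪S.toFun ⟨u, hu⟩, w⟫_A = ⟪u, S.toFun ⟨w, hw⟩⟫_A := fun u hu w hw => hSsa.2 ⟨w,hw⟩ ⟨u,hu⟩
  conv_lhs => rw [← hy]
  rw [RCSM.inner_sub_right, RCSM.inner_smul_right_complex,
    hsym _ (assum.res_mem_S μ hμ x) _ (assum.res_mem_S (-μ) hμ' y) |>.symm]
  have hx := assum.res_eq μ hμ x
  conv_rhs => rw [← hx]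
  rw [RCSM.inner_sub_left, RCSM.inner_smul_left_complex]
  push_cast
  simp only [Complex.star_def, map_mul, Complex.conj_I, Complex.conj_ofReal]
  module

private lemma inner_res_le (hSsa : S.SelfAdjointOp (A := A)) {μ : ℝ} (hμ : μ ≠ 0) (x : E) :
    ((μ:ℝ)^2) • ⟪assum.res μ x, assum.res μ x⟫_A ≤ ⟪x, x⟫_A := by
  conv_rhs => rw [← assum.res_eq μ hμ x]
  rw [inner_shift_expand hSsa μ (assum.res_mem_S μ hμ x)]
  exact le_add_of_nonneg_left RCSM.inner_self_nonneg

private lemma norm_res_le (hSsa : S.SelfAdjointOp (A := A)) {μ : ℝ} (hμ : μ ≠ 0) (x : E) :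
    ‖assum.res μ x‖ ≤ |μ|⁻¹ * ‖x‖ := by
  have h1 := assum.inner_res_le hSsa hμ x
  have h2 : ((μ:ℝ)^2) * ‖assum.res μ x‖^2 ≤ ‖x‖^2 := by
    have h3 : ‖((μ:ℝ)^2) • ⟪assum.res μ x, assum.res μ x⟫_A‖ ≤ ‖⟪x, x⟫_A‖ :=
      CStarAlgebra.norm_le_norm_of_nonneg_of_le
        (smul_nonneg (sq_nonneg μ) RCSM.inner_self_nonneg) h1
    rw [norm_smul] at h3
    rw [RCSM.norm_sq_eq (A := A), RCSM.norm_sq_eq (A := A)]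
    calc ((μ:ℝ)^2) * ‖⟪assum.res μ x, assum.res μ x⟫_A‖
        = ‖(μ:ℝ)^2‖ * ‖⟪assum.res μ x, assum.res μ x⟫_A‖ := by
          rw [Real.norm_of_nonneg (sq_nonneg μ)]
      _ ≤ ‖⟪x, x⟫_A‖ := h3
  have habs : (0:ℝ) < |μ| := abs_pos.mpr hμ
  have h4 : (|μ| * ‖assum.res μ x‖)^2 ≤ ‖x‖^2 := by
    rw [mul_pow, sq_abs]; exact h2
  have h5 : |μ| * ‖assum.res μ x‖ ≤ ‖x‖ := by
    have := Real.sqrt_le_sqrt h4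
    rwa [Real.sqrt_sq (by positivity), Real.sqrt_sq (norm_nonneg x)] at this
  rw [inv_mul_eq_div, le_div_iff₀ habs, mul_comm]
  exact h5

private lemma core_dense_E (hTdense : Dense (T.dom : Set E)) :
    Dense (assum.core : Set E) := by
  rw [Metric.dense_iff]
  intro x r hr
  obtain ⟨z, hz_ball, hz_mem⟩ := Metric.dense_iff.mp hTdense x (r/2) (by positivity)
  obtain ⟨y, hy_core, hy_close⟩ := assum.core_dense ⟨z, hz_mem⟩ ((r/2)^2) (by positivity)
  refine ⟨y, ?_, hy_core⟩
  rw [Metric.mem_ball] at hz_ball ⊢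
  have h1 : ‖z - y‖^2 < (r/2)^2 := by
    have h2 := hy_close
    nlinarith [sq_nonneg ‖T.toFun ⟨z, hz_mem⟩ - T.toFun ⟨y, assum.core_sub y hy_core⟩‖]
  have h3 : ‖z - y‖ < r/2 := by
    nlinarith [norm_nonneg (z - y), sq_nonneg (‖z - y‖ - r/2)]
  calc dist y x ≤ dist y z + dist z x := dist_triangle y z x
    _ < r/2 + r/2 := by
        rw [dist_comm y z, dist_eq_norm]
        exact add_lt_add h3 hz_ball
    _ = r := by ring

private lemma comm_apply (hSsa : S.SelfAdjointOp (A := A)) (hTcl : T.IsClosedOp)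
    {μ : ℝ} (hμ : μ ≠ 0) {X : E →L[ℂ] E}
    (hX : ∀ (x : E) (hx : x ∈ assum.core),
      X x = S.toFun ⟨T.toFun ⟨assum.res μ x, assum.res_mem_T μ hμ x hx⟩,
          assum.Tres_mem_S μ hμ x hx⟩
        - T.toFun ⟨x, assum.core_sub x hx⟩
        - (Complex.I * μ) • T.toFun ⟨assum.res μ x, assum.res_mem_T μ hμ x hx⟩)
    {ξ : E} (hs : ξ ∈ S.dom) (ht : ξ ∈ T.dom)
    (hst : S.toFun ⟨ξ, hs⟩ ∈ T.dom) (hts : T.toFun ⟨ξ, ht⟩ ∈ S.dom) :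
    S.toFun ⟨T.toFun ⟨ξ, ht⟩, hts⟩ - T.toFun ⟨S.toFun ⟨ξ, hs⟩, hst⟩
      = X (S.toFun ⟨ξ, hs⟩ - (Complex.I * μ) • ξ) := by
  classical
  set η : E := S.toFun ⟨ξ, hs⟩ - (Complex.I * μ) • ξ with hη_def
  have hηT : η ∈ T.dom := sub_mem hst (T.dom.smul_mem _ ht)
  have hTη : T.toFun ⟨η, hηT⟩
      = T.toFun ⟨S.toFun ⟨ξ, hs⟩, hst⟩ - (Complex.I * μ) • T.toFun ⟨ξ, ht⟩ := by
    have h0 : (⟨η, hηT⟩ : T.dom) = ⟨S.toFun ⟨ξ, hs⟩, hst⟩ - (Complex.I * μ) • ⟨ξ, ht⟩ :=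
      Subtype.ext rfl
    rw [h0, map_sub, map_smul]
  -- approximating sequence from the core
  have hseq : ∀ n : ℕ, ∃ (y : E) (hy : y ∈ assum.core),
      ‖η - y‖^2 + ‖T.toFun ⟨η, hηT⟩ - T.toFun ⟨y, assum.core_sub y hy⟩‖^2 < 1/(n+1) :=
    fun n => assum.core_dense ⟨η, hηT⟩ (1/(n+1)) (by positivity)
  choose y hy hbound using hseq
  have hrt : Filter.Tendsto (fun n : ℕ => Real.sqrt (1/(n+1))) Filter.atTop (nhds 0) := by
    have h1 : Filter.Tendsto (fun n : ℕ => (1:ℝ)/(n+1)) Filter.atTop (nhds 0) :=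
      tendsto_one_div_add_atTop_nhds_zero_nat
    have h2 : Filter.Tendsto (fun n : ℕ => Real.sqrt (1/(n+1))) Filter.atTop
        (nhds (Real.sqrt 0)) := (Real.continuous_sqrt.tendsto 0).comp h1
    rwa [Real.sqrt_zero] at h2
  have hy1 : Filter.Tendsto y Filter.atTop (nhds η) := by
    rw [tendsto_iff_norm_sub_tendsto_zero]
    refine squeeze_zero (fun n => norm_nonneg _) (fun n => ?_) hrt
    rw [norm_sub_rev]
    refine Real.le_sqrt_of_sq_le ?_
    nlinarith [hbound n, sq_nonneg ‖T.toFun ⟨η, hηT⟩ - T.toFun ⟨y n, assum.core_sub _ (hy n)⟩‖]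
  have hy2 : Filter.Tendsto (fun n => T.toFun ⟨y n, assum.core_sub _ (hy n)⟩) Filter.atTop
      (nhds (T.toFun ⟨η, hηT⟩)) := by
    rw [tendsto_iff_norm_sub_tendsto_zero]
    refine squeeze_zero (fun n => norm_nonneg _) (fun n => ?_) hrt
    rw [norm_sub_rev]
    refine Real.le_sqrt_of_sq_le ?_
    nlinarith [hbound n, sq_nonneg ‖η - y n‖]
  set w : E := X η + T.toFun ⟨η, hηT⟩ with hw_def
  have hw : Filter.Tendsto (fun n => X (y n) + T.toFun ⟨y n, assum.core_sub _ (hy n)⟩)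
      Filter.atTop (nhds w) :=
    ((X.continuous.tendsto η).comp hy1).add hy2
  -- the sequence ζ n = T (res μ (y n))
  have hζ_eq : ∀ n, T.toFun ⟨assum.res μ (y n), assum.res_mem_T μ hμ (y n) (hy n)⟩
      = assum.res μ (X (y n) + T.toFun ⟨y n, assum.core_sub _ (hy n)⟩) := by
    intro n
    set ζ : E := T.toFun ⟨assum.res μ (y n), assum.res_mem_T μ hμ (y n) (hy n)⟩ with hζ_def
    have hζS : ζ ∈ S.dom := assum.Tres_mem_S μ hμ (y n) (hy n)
    have h1 : S.toFun ⟨ζ, hζS⟩ - (Complex.I * μ) • ζ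
        = X (y n) + T.toFun ⟨y n, assum.core_sub _ (hy n)⟩ := by
      rw [hX (y n) (hy n)]
      abel
    have h2 := assum.res_apply_shift hSsa hμ hζS
    rw [h1] at h2
    exact h2.symm
  have hζ_tendsto : Filter.Tendsto
      (fun n => T.toFun ⟨assum.res μ (y n), assum.res_mem_T μ hμ (y n) (hy n)⟩)
      Filter.atTop (nhds (assum.res μ w)) := by
    exact (((assum.res μ).continuous.tendsto w).comp hw).congr (fun n => (hζ_eq n).symm)
  have hres_y : Filter.Tendsto (fun n => assum.res μ (y n)) Filter.atTop (nhds ξ) := by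
    have h1 : assum.res μ η = ξ := assum.res_apply_shift hSsa hμ hs
    have := ((assum.res μ).continuous.tendsto η).comp hy1
    rwa [h1] at this
  have hmemg : ∀ n, ((assum.res μ (y n),
      T.toFun ⟨assum.res μ (y n), assum.res_mem_T μ hμ (y n) (hy n)⟩) : E × E) ∈ T.graph :=
    fun n => ⟨⟨assum.res μ (y n), assum.res_mem_T μ hμ (y n) (hy n)⟩, rfl⟩
  have hpair : Filter.Tendsto (fun n => ((assum.res μ (y n),
      T.toFun ⟨assum.res μ (y n), assum.res_mem_T μ hμ (y n) (hy n)⟩) : E × E))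
      Filter.atTop (nhds (ξ, assum.res μ w)) :=
    hres_y.prodMk_nhds hζ_tendsto
  have hlim : ((ξ, assum.res μ w) : E × E) ∈ T.graph :=
    hTcl.mem_of_tendsto hpair (Filter.Eventually.of_forall hmemg)
  obtain ⟨xhat, hxhat⟩ := hlim
  have hx1 : ξ = (xhat : E) := congrArg Prod.fst hxhat
  have hx2 : assum.res μ w = T.toFun xhat := congrArg Prod.snd hxhat
  have hTξ : T.toFun ⟨ξ, ht⟩ = assum.res μ w := by
    rw [hx2]
    exact toFun_congr_ce T hx1
  have hSTξ : S.toFun ⟨T.toFun ⟨ξ, ht⟩, hts⟩ = w + (Complex.I * μ) • T.toFun ⟨ξ, ht⟩ := by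
    have h1 := assum.res_eq μ hμ w
    have h2 : S.toFun ⟨T.toFun ⟨ξ, ht⟩, hts⟩
        = S.toFun ⟨assum.res μ w, assum.res_mem_S μ hμ w⟩ := toFun_congr_ce S hTξ
    rw [h2]
    have h3 : S.toFun ⟨assum.res μ w, assum.res_mem_S μ hμ w⟩
        = w + (Complex.I * μ) • assum.res μ w := by
      exact eq_add_of_sub_eq h1
    rw [h3, ← hTξ]
  rw [hSTξ, hw_def, hTη]
  abel

private lemma skew_core (hSsa : S.SelfAdjointOp (A := A)) (hTsa : T.SelfAdjointOp (A := A))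
    {μ : ℝ} (hμ : μ ≠ 0) {X : E →L[ℂ] E}
    (hX : ∀ (x : E) (hx : x ∈ assum.core),
      X x = S.toFun ⟨T.toFun ⟨assum.res μ x, assum.res_mem_T μ hμ x hx⟩,
          assum.Tres_mem_S μ hμ x hx⟩
        - T.toFun ⟨x, assum.core_sub x hx⟩
        - (Complex.I * μ) • T.toFun ⟨assum.res μ x, assum.res_mem_T μ hμ x hx⟩)
    {z w : E} (hz : z ∈ assum.core) (hw : w ∈ assum.core) :
    ⟪X z, assum.res μ w⟫_A = - ⟪assum.res μ z, X w⟫_A := by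
  have hz_T : z ∈ T.dom := assum.core_sub z hz
  have hw_T : w ∈ T.dom := assum.core_sub w hw
  have hRz_S : assum.res μ z ∈ S.dom := assum.res_mem_S μ hμ z
  have hRw_S : assum.res μ w ∈ S.dom := assum.res_mem_S μ hμ w
  have hRz_T : assum.res μ z ∈ T.dom := assum.res_mem_T μ hμ z hz
  have hRw_T : assum.res μ w ∈ T.dom := assum.res_mem_T μ hμ w hw
  have hTRz_S : T.toFun ⟨assum.res μ z, hRz_T⟩ ∈ S.dom := assum.Tres_mem_S μ hμ z hz
  have hTRw_S : T.toFun ⟨assum.res μ w, hRw_T⟩ ∈ S.dom := assum.Tres_mem_S μ hμ w hw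
  have hSRz : S.toFun ⟨assum.res μ z, hRz_S⟩ = z + (Complex.I*μ) • assum.res μ z :=
    eq_add_of_sub_eq (assum.res_eq μ hμ z)
  have hSRw : S.toFun ⟨assum.res μ w, hRw_S⟩ = w + (Complex.I*μ) • assum.res μ w :=
    eq_add_of_sub_eq (assum.res_eq μ hμ w)
  have Ssym : ∀ (a : E) (haS : a ∈ S.dom) (b : E) (hbS : b ∈ S.dom),
      ⟪S.toFun ⟨a, haS⟩, b⟫_A = ⟪a, S.toFun ⟨b, hbS⟩⟫_A :=
    fun a haS b hbS => hSsa.2 ⟨b,hbS⟩ ⟨a,haS⟩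
  have Tsym : ∀ (a : E) (haT : a ∈ T.dom) (b : E) (hbT : b ∈ T.dom),
      ⟪T.toFun ⟨a, haT⟩, b⟫_A = ⟪a, T.toFun ⟨b, hbT⟩⟫_A :=
    fun a haT b hbT => hTsa.2 ⟨b,hbT⟩ ⟨a,haT⟩
  rw [hX z hz, hX w hw]
  simp only [RCSM.inner_sub_left, RCSM.inner_sub_right,
    RCSM.inner_smul_left_complex, RCSM.inner_smul_right_complex]
  rw [Ssym _ hTRz_S _ hRw_S, hSRw, ← Ssym _ hRz_S _ hTRw_S, hSRz,
    Tsym z hz_T _ hRw_T, ← Tsym _ hRz_T w hw_T]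
  simp only [RCSM.inner_add_left, RCSM.inner_add_right,
    RCSM.inner_smul_left_complex, RCSM.inner_smul_right_complex]
  rw [← Tsym _ hRz_T _ hRw_T]
  simp only [Complex.star_def, map_mul, Complex.conj_I, Complex.conj_ofReal]
  module

private lemma skew_opsmul {G : E → E} (hskew : ∀ z w : E, ⟪G z, w⟫_A = -⟪z, G w⟫_A)
    (a : A) (x : E) : G (x <• a) = G x <• a := by
  have h : ∀ w : E, ⟪G (x <• a) - G x <• a, w⟫_A = 0 := by
    intro w
    rw [RCSM.inner_sub_left, hskew (x <• a) w, RCSM.inner_op_smul_left,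
      RCSM.inner_op_smul_left]
    have h1 : ⟪x, G w⟫_A = -⟪G x, w⟫_A := by
      rw [hskew x w, neg_neg]
    rw [h1]
    noncomm_ring
  have h2 := inner_eq_zero_of_forall_ce (A := A) h
  exact sub_eq_zero.mp h2

private lemma skew_ext {G : E →L[ℂ] E} (hdense : Dense (assum.core : Set E))
    (hcore : ∀ z ∈ (assum.core : Set E), ∀ w ∈ (assum.core : Set E),
      ⟪G z, w⟫_A = -⟪z, G w⟫_A) :
    ∀ z w : E, ⟪G z, w⟫_A = -⟪z, G w⟫_A := by
  have step1 : ∀ w ∈ (assum.core : Set E), ∀ z : E, ⟪G z, w⟫_A = -⟪z, G w⟫_A := by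
    intro w hw z
    have hf : Continuous fun z : E => ⟪G z, w⟫_A :=
      (continuous_inner_left_ce w).comp G.continuous
    have hg : Continuous fun z : E => -⟪z, G w⟫_A := (continuous_inner_left_ce (G w)).neg
    exact congrFun (Continuous.ext_on hdense hf hg (fun x hx => hcore x hx w hw)) z
  intro z w
  have hf : Continuous fun w : E => ⟪G z, w⟫_A := continuous_inner_right_ce (G z)
  have hg : Continuous fun w : E => -⟪z, G w⟫_A :=
    ((continuous_inner_right_ce z).comp G.continuous).neg
  exact congrFun (Continuous.ext_on hdense hf hg (fun x hx => step1 x hx z)) w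

private lemma norm_bound_ext {G : E → E} (hGc : Continuous G) {c : ℝ}
    (hdense : Dense (assum.core : Set E))
    (hcore : ∀ z ∈ (assum.core : Set E), ‖G z‖ ≤ c * ‖z‖) :
    ∀ z : E, ‖G z‖ ≤ c * ‖z‖ := by
  have hclosed : IsClosed {z : E | ‖G z‖ ≤ c * ‖z‖} :=
    isClosed_le hGc.norm (continuous_const.mul continuous_norm)
  intro z
  have h2 : closure (assum.core : Set E) ⊆ {z : E | ‖G z‖ ≤ c * ‖z‖} :=
    hclosed.closure_subset_iff.mpr hcore
  rw [hdense.closure_eq] at h2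
  exact h2 (Set.mem_univ z)

private lemma G_norm_core (hSsa : S.SelfAdjointOp (A := A)) (hTcl : T.IsClosedOp)
    {μ : ℝ} (hμ1 : 1 ≤ μ) {X X1 : E →L[ℂ] E}
    (hX : ∀ (x : E) (hx : x ∈ assum.core),
      X x = S.toFun ⟨T.toFun ⟨assum.res μ x, assum.res_mem_T μ (by positivity : (0:ℝ) < μ).ne' x hx⟩,
          assum.Tres_mem_S μ (by positivity : (0:ℝ) < μ).ne' x hx⟩
        - T.toFun ⟨x, assum.core_sub x hx⟩
        - (Complex.I * μ) • T.toFun ⟨assum.res μ x,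
            assum.res_mem_T μ (by positivity : (0:ℝ) < μ).ne' x hx⟩)
    (hX1 : ∀ (x : E) (hx : x ∈ assum.core),
      X1 x = S.toFun ⟨T.toFun ⟨assum.res 1 x, assum.res_mem_T 1 one_ne_zero x hx⟩,
          assum.Tres_mem_S 1 one_ne_zero x hx⟩
        - T.toFun ⟨x, assum.core_sub x hx⟩
        - (Complex.I * (1:ℝ)) • T.toFun ⟨assum.res 1 x, assum.res_mem_T 1 one_ne_zero x hx⟩)
    {c1 : ℝ} (hc1 : 0 ≤ c1) (hc1b : ∀ u : E, ‖X1 u‖ ≤ c1 * ‖u‖)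
    {z : E} (hz : z ∈ assum.core) :
    ‖assum.res (-μ) (X z)‖ ≤ (2 * c1 / μ) * ‖z‖ := by
  letI : NormedSpace ℂ E := NormedSpace.ofCore (RCSM.normedSpaceCore (A := A))
  have hμpos : (0:ℝ) < μ := by positivity
  have hμ : μ ≠ 0 := hμpos.ne'
  have hz_T : z ∈ T.dom := assum.core_sub z hz
  have hRz_S : assum.res μ z ∈ S.dom := assum.res_mem_S μ hμ z
  have hRz_T : assum.res μ z ∈ T.dom := assum.res_mem_T μ hμ z hz
  have hTRz_S : T.toFun ⟨assum.res μ z, hRz_T⟩ ∈ S.dom := assum.Tres_mem_S μ hμ z hz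
  have hSRz : S.toFun ⟨assum.res μ z, hRz_S⟩ = z + (Complex.I*μ) • assum.res μ z :=
    eq_add_of_sub_eq (assum.res_eq μ hμ z)
  have hSRz_T : S.toFun ⟨assum.res μ z, hRz_S⟩ ∈ T.dom := by
    rw [hSRz]
    exact add_mem hz_T (T.dom.smul_mem _ hRz_T)
  -- X z equals the commutator applied to res μ z
  have hXz : X z = S.toFun ⟨T.toFun ⟨assum.res μ z, hRz_T⟩, hTRz_S⟩
      - T.toFun ⟨S.toFun ⟨assum.res μ z, hRz_S⟩, hSRz_T⟩ := by
    rw [hX z hz]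
    have h0 : (⟨S.toFun ⟨assum.res μ z, hRz_S⟩, hSRz_T⟩ : T.dom)
        = ⟨z, hz_T⟩ + (Complex.I*μ) • ⟨assum.res μ z, hRz_T⟩ := by
      apply Subtype.ext
      simp only [Submodule.coe_add, SetLike.val_smul]
      exact hSRz
    rw [h0, map_add, map_smul]
    abel
  have hK := assum.comm_apply hSsa hTcl one_ne_zero hX1 hRz_S hRz_T hSRz_T hTRz_S
  rw [hXz, hK]
  -- the argument of X1
  have harg : S.toFun ⟨assum.res μ z, hRz_S⟩ - (Complex.I * (1:ℝ)) • assum.res μ z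
      = z + (Complex.I * ((μ:ℝ) - 1)) • assum.res μ z := by
    rw [hSRz]
    push_cast
    module
  rw [harg]
  have hRz_norm : ‖assum.res μ z‖ ≤ |μ|⁻¹ * ‖z‖ := assum.norm_res_le hSsa hμ z
  have habs : |μ| = μ := abs_of_pos hμpos
  have harg_norm : ‖z + (Complex.I * ((μ:ℝ) - 1)) • assum.res μ z‖ ≤ 2 * ‖z‖ := by
    calc ‖z + (Complex.I * ((μ:ℝ) - 1)) • assum.res μ z‖
        ≤ ‖z‖ + ‖(Complex.I * ((μ:ℝ) - 1)) • assum.res μ z‖ := norm_add_le _ _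
      _ = ‖z‖ + ‖Complex.I * ((μ:ℝ) - 1)‖ * ‖assum.res μ z‖ := by rw [norm_smul]
      _ = ‖z‖ + (μ - 1) * ‖assum.res μ z‖ := by
          congr 2
          have hcast : Complex.I * ((μ:ℝ) - 1) = Complex.I * (((μ - 1 : ℝ)):ℂ) := by
            push_cast; ring
          rw [hcast, norm_mul, Complex.norm_I, one_mul, Complex.norm_real,
            Real.norm_eq_abs, abs_of_nonneg (by linarith : (0:ℝ) ≤ μ - 1)]
      _ ≤ ‖z‖ + (μ - 1) * (μ⁻¹ * ‖z‖) := by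
          have h5 : (0:ℝ) ≤ μ - 1 := by linarith
          have h6 := hRz_norm
          rw [habs] at h6
          nlinarith [norm_nonneg (assum.res μ z)]
      _ ≤ ‖z‖ + 1 * ‖z‖ := by
          have h7 : (μ - 1) * μ⁻¹ ≤ 1 := by
            rw [sub_mul]
            have h8 : μ * μ⁻¹ = 1 := mul_inv_cancel₀ hμ
            nlinarith [inv_nonneg.mpr hμpos.le]
          nlinarith [norm_nonneg z, inv_nonneg.mpr hμpos.le]
      _ = 2 * ‖z‖ := by ring
  have hXarg : ‖X1 (z + (Complex.I * ((μ:ℝ) - 1)) • assum.res μ z)‖ ≤ c1 * (2 * ‖z‖) := by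
    calc ‖X1 (z + (Complex.I * ((μ:ℝ) - 1)) • assum.res μ z)‖
        ≤ c1 * ‖z + (Complex.I * ((μ:ℝ) - 1)) • assum.res μ z‖ := hc1b _
      _ ≤ c1 * (2 * ‖z‖) := by nlinarith
  calc ‖assum.res (-μ) (X1 (z + (Complex.I * ((μ:ℝ) - 1)) • assum.res μ z))‖
      ≤ |(-μ:ℝ)|⁻¹ * ‖X1 (z + (Complex.I * ((μ:ℝ) - 1)) • assum.res μ z)‖ :=
        assum.norm_res_le hSsa (neg_ne_zero.mpr hμ) _
    _ ≤ |(-μ:ℝ)|⁻¹ * (c1 * (2 * ‖z‖)) := by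
        have h9 : (0:ℝ) ≤ |(-μ:ℝ)|⁻¹ := by positivity
        nlinarith [hXarg, norm_nonneg (X1 (z + (Complex.I * ((μ:ℝ) - 1)) • assum.res μ z))]
    _ = (2 * c1 / μ) * ‖z‖ := by
        rw [abs_neg, habs]
        field_simp

end SumAssumption

end AuxOp


private lemma cs_basic_ce {A E : Type*} [CStarAlgebra A] [PartialOrder A] [StarOrderedRing A]
    [NormedAddCommGroup E] [Module ℂ E] [SMul Aᵐᵒᵖ E] [RightCStarModule A E] (u v : E) :
    ⟪u, v⟫_A + ⟪v, u⟫_A ≤ ⟪u, u⟫_A + ⟪v, v⟫_A := by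
  have h : (0:A) ≤ ⟪u - v, u - v⟫_A := RCSM.inner_self_nonneg
  simp only [RCSM.inner_sub_left, RCSM.inner_sub_right] at h
  rw [← sub_nonneg]
  convert h using 1
  abel

/-- **Commutator estimate.** Let `S, T` be selfadjoint regular operators in a Hilbert
C⋆-module `E` over `A` satisfying the standing assumption. Then there is a constant `C > 0`
such that for every `ξ ∈ dom [S,T]` one has
`± i ⟪[S,T] ξ, ξ⟫ ≤ (1/2) ⟪S ξ, S ξ⟫ + C ⟪ξ, ξ⟫` as selfadjoint elements of `A`. -/
theorem commutator_estimate
    (S T : UnboundedOperator E)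
    (hSsa : S.SelfAdjointOp (A := A)) (hSreg : S.Regular (A := A))
    (hTsa : T.SelfAdjointOp (A := A)) (hTreg : T.Regular (A := A))
    (assum : SumAssumption S T) :
    ∃ C : ℝ, 0 < C ∧ ∀ (ξ : E) (hs : ξ ∈ S.dom) (ht : ξ ∈ T.dom)
      (hst : S.toFun ⟨ξ, hs⟩ ∈ T.dom) (hts : T.toFun ⟨ξ, ht⟩ ∈ S.dom),
      (Complex.I • ⟪S.toFun ⟨T.toFun ⟨ξ, ht⟩, hts⟩ - T.toFun ⟨S.toFun ⟨ξ, hs⟩, hst⟩, ξ⟫_A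
          ≤ (((1 : ℝ) / 2 : ℝ) : ℂ) • ⟪S.toFun ⟨ξ, hs⟩, S.toFun ⟨ξ, hs⟩⟫_A
            + ((C : ℝ) : ℂ) • ⟪ξ, ξ⟫_A)
      ∧ (-(Complex.I • ⟪S.toFun ⟨T.toFun ⟨ξ, ht⟩, hts⟩ - T.toFun ⟨S.toFun ⟨ξ, hs⟩, hst⟩, ξ⟫_A)
          ≤ (((1 : ℝ) / 2 : ℝ) : ℂ) • ⟪S.toFun ⟨ξ, hs⟩, S.toFun ⟨ξ, hs⟩⟫_A
            + ((C : ℝ) : ℂ) • ⟪ξ, ξ⟫_A) := by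
  classical
  letI : NormedSpace ℂ E := NormedSpace.ofCore (RCSM.normedSpaceCore (A := A))
  obtain ⟨X1, hX1⟩ := assum.comm_bounded 1 one_ne_zero
  obtain ⟨c1, hc1pos, hc1b⟩ := X1.bound
  set μ : ℝ := 4 * c1 + 4 with hμ_def
  have hμ1 : (1:ℝ) ≤ μ := by nlinarith
  have hμpos : (0:ℝ) < μ := by linarith
  have hμ : μ ≠ 0 := hμpos.ne'
  obtain ⟨X, hX⟩ := assum.comm_bounded μ hμ
  set G : E →L[ℂ] E := (assum.res (-μ)).comp X with hG_def
  have hTdense : Dense (T.dom : Set E) := hTreg.2.1.1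
  have hdense := assum.core_dense_E hTdense
  have hTcl : T.IsClosedOp := hTreg.1
  have hadjneg : ∀ u v : E, ⟪assum.res (-μ) u, v⟫_A = ⟪u, assum.res μ v⟫_A := by
    intro u v
    have h := assum.inner_res_adj hSsa (neg_ne_zero.mpr hμ) u v
    rwa [neg_neg] at h
  have hskew : ∀ z w : E, ⟪G z, w⟫_A = -⟪z, G w⟫_A := by
    refine assum.skew_ext hdense ?_
    intro z hz w hw
    have h1 : ⟪X z, assum.res μ w⟫_A = -⟪assum.res μ z, X w⟫_A :=
      assum.skew_core hSsa hTsa hμ hX hz hw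
    show ⟪assum.res (-μ) (X z), w⟫_A = -⟪z, assum.res (-μ) (X w)⟫_A
    rw [hadjneg (X z) w, h1, assum.inner_res_adj hSsa hμ z (X w)]
  have hGb : ∀ z : E, ‖G z‖ ≤ (1/2 : ℝ) * ‖z‖ := by
    have hb1 : ∀ z ∈ (assum.core : Set E), ‖G z‖ ≤ (2*c1/μ) * ‖z‖ := fun z hz =>
      assum.G_norm_core hSsa hTcl hμ1 hX hX1 hc1pos.le hc1b hz
    have hball : ∀ z : E, ‖G z‖ ≤ (2*c1/μ)*‖z‖ :=
      assum.norm_bound_ext G.continuous hdense hb1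
    intro z
    have h3 : (2*c1/μ) ≤ 1/2 := by
      rw [div_le_iff₀ hμpos]
      nlinarith
    nlinarith [hball z, norm_nonneg z]
  have hGsmul : ∀ (a : A) (y : E), G (y <• a) = G y <• a :=
    SumAssumption.skew_opsmul hskew
  have hpaschke : ∀ x : E, ⟪G x, G x⟫_A ≤ (((1:ℝ)/2)^2 : ℝ) • ⟪x,x⟫_A :=
    paschke_ce (fun y => G y) (1/2) (by norm_num) hGb hGsmul
  refine ⟨μ^2/2, by positivity, ?_⟩
  intro ξ hs ht hst hts
  have hk := assum.comm_apply hSsa hTcl hμ hX hs ht hst hts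
  set η : E := S.toFun ⟨ξ, hs⟩ - (Complex.I * μ) • ξ with hη_def
  have hb : ⟪S.toFun ⟨T.toFun ⟨ξ, ht⟩, hts⟩ - T.toFun ⟨S.toFun ⟨ξ, hs⟩, hst⟩, ξ⟫_A
      = ⟪G η, η⟫_A := by
    rw [hk]
    have hξ : ξ = assum.res μ η := (assum.res_apply_shift hSsa hμ hs).symm
    have hadj2 := hadjneg (X η) η
    show ⟪X η, ξ⟫_A = ⟪assum.res (-μ) (X η), η⟫_A
    rw [hadj2]
    conv_lhs => rw [hξ]
  have hexp : ⟪η, η⟫_A = ⟪S.toFun ⟨ξ, hs⟩, S.toFun ⟨ξ, hs⟩⟫_A + ((μ:ℝ)^2) • ⟪ξ, ξ⟫_A := by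
    have h := SumAssumption.inner_shift_expand hSsa μ hs
    rw [← hη_def] at h
    exact h
  have hGη : ⟪G η, G η⟫_A ≤ (((1:ℝ)/2)^2 : ℝ) • ⟪η,η⟫_A := hpaschke η
  -- Cauchy-Schwarz with scaling, for both signs
  have hsgn : ∀ σ : ℂ, σ = 1 ∨ σ = -1 →
      (σ * Complex.I) • ⟪G η, η⟫_A + (σ * Complex.I) • ⟪G η, η⟫_A
        ≤ (2:ℝ) • ⟪G η, G η⟫_A + ((1:ℝ)/2 : ℝ) • ⟪η, η⟫_A := by
    intro σ hσ
    have hσ2 : σ * σ = 1 := by rcases hσ with h|h <;> rw [h] <;> ring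
    have hσstar : star σ = σ := by rcases hσ with h|h <;> rw [h] <;> simp
    set sc : ℂ := ((Real.sqrt 2 : ℝ) : ℂ) with hsc_def
    have hsq2 : (Real.sqrt 2 : ℝ) * Real.sqrt 2 = 2 := Real.mul_self_sqrt (by norm_num)
    have hsq2' : sc * sc = 2 := by
      rw [hsc_def, ← Complex.ofReal_mul, hsq2]; norm_num
    have hsqpos : (0:ℝ) < Real.sqrt 2 := Real.sqrt_pos.mpr (by norm_num)
    have hsne : sc ≠ 0 := by
      rw [hsc_def]
      exact_mod_cast Complex.ofReal_ne_zero.mpr hsqpos.ne'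
    set u : E := sc • G η with hu_def
    set v : E := (σ * Complex.I / sc) • η with hv_def
    have hcs := cs_basic_ce (A := A) u v
    have hstar_sc : star sc = sc := by rw [hsc_def, Complex.star_def, Complex.conj_ofReal]
    have hstar_I : star Complex.I = -Complex.I := by simp [Complex.star_def]
    have hstar_c : star (σ * Complex.I / sc) = σ * -Complex.I / sc := by
      rw [star_div₀, star_mul', hσstar, hstar_sc, hstar_I]
    have huu : ⟪u, u⟫_A = (2:ℝ) • ⟪G η, G η⟫_A := by
      rw [hu_def, RCSM.inner_smul_left_complex, RCSM.inner_smul_right_complex,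
        smul_smul, hstar_sc, hsq2', ← cmplx_smul_real]
      norm_num
    have hvv : ⟪v, v⟫_A = ((1:ℝ)/2 : ℝ) • ⟪η, η⟫_A := by
      rw [hv_def, RCSM.inner_smul_left_complex, RCSM.inner_smul_right_complex,
        smul_smul, hstar_c, ← cmplx_smul_real]
      congr 1
      rw [div_mul_div_comm, hsq2',
        show σ * -Complex.I * (σ * Complex.I) = (σ*σ) * -(Complex.I*Complex.I) from by ring,
        hσ2, Complex.I_mul_I]
      norm_num
    have huv : ⟪u, v⟫_A = (σ * Complex.I) • ⟪G η, η⟫_A := by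
      rw [hu_def, hv_def, RCSM.inner_smul_left_complex,
        RCSM.inner_smul_right_complex, smul_smul, hstar_sc]
      congr 1
      rw [mul_comm sc _, div_mul_cancel₀ _ hsne]
    have hvu : ⟪v, u⟫_A = (σ * Complex.I) • ⟪G η, η⟫_A := by
      have hηG : ⟪η, G η⟫_A = -⟪G η, η⟫_A := by rw [hskew η η, neg_neg]
      rw [hv_def, hu_def, RCSM.inner_smul_left_complex,
        RCSM.inner_smul_right_complex, smul_smul, hηG, hstar_c, smul_neg, ← neg_smul]
      congr 1
      rw [div_mul_cancel₀ _ hsne]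
      ring
    rw [huu, hvv, huv, hvu] at hcs
    exact hcs
  -- combine
  have hhalf : (2:ℝ) • ⟪G η, G η⟫_A ≤ ((1:ℝ)/2 : ℝ) • ⟪η, η⟫_A := by
    have h1 := smul_le_smul_ce hGη (by norm_num : (0:ℝ) ≤ 2)
    rw [smul_smul] at h1
    convert h1 using 2
    norm_num
  have hfin : ∀ σ : ℂ, σ = 1 ∨ σ = -1 →
      (σ * Complex.I) • ⟪S.toFun ⟨T.toFun ⟨ξ, ht⟩, hts⟩ - T.toFun ⟨S.toFun ⟨ξ, hs⟩, hst⟩, ξ⟫_A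
        ≤ (((1 : ℝ) / 2 : ℝ) : ℂ) • ⟪S.toFun ⟨ξ, hs⟩, S.toFun ⟨ξ, hs⟩⟫_A
          + ((μ^2/2 : ℝ) : ℂ) • ⟪ξ, ξ⟫_A := by
    intro σ hσ
    have h1 := hsgn σ hσ
    have h2 : (σ * Complex.I) • ⟪G η, η⟫_A + (σ * Complex.I) • ⟪G η, η⟫_A
        ≤ ⟪η, η⟫_A := by
      calc (σ * Complex.I) • ⟪G η, η⟫_A + (σ * Complex.I) • ⟪G η, η⟫_A
          ≤ (2:ℝ) • ⟪G η, G η⟫_A + ((1:ℝ)/2 : ℝ) • ⟪η, η⟫_A := h1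
        _ ≤ ((1:ℝ)/2 : ℝ) • ⟪η, η⟫_A + ((1:ℝ)/2 : ℝ) • ⟪η, η⟫_A := by
            exact add_le_add_left hhalf _
        _ = ⟪η, η⟫_A := by
            rw [← add_smul]
            norm_num
    have h3 : (σ * Complex.I) • ⟪G η, η⟫_A ≤ ((1:ℝ)/2 : ℝ) • ⟪η, η⟫_A := by
      have h4 := smul_le_smul_ce h2 (by norm_num : (0:ℝ) ≤ 1/2)
      have h5 : ((1:ℝ)/2 : ℝ) • ((σ * Complex.I) • ⟪G η, η⟫_A + (σ * Complex.I) • ⟪G η, η⟫_A)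
          = (σ * Complex.I) • ⟪G η, η⟫_A := by
        rw [smul_add, smul_comm ((1:ℝ)/2) (σ * Complex.I), ← smul_add, ← add_smul]
        norm_num
      rwa [h5] at h4
    rw [hb]
    calc (σ * Complex.I) • ⟪G η, η⟫_A ≤ ((1:ℝ)/2 : ℝ) • ⟪η, η⟫_A := h3
      _ = (((1 : ℝ) / 2 : ℝ) : ℂ) • ⟪S.toFun ⟨ξ, hs⟩, S.toFun ⟨ξ, hs⟩⟫_A
          + ((μ^2/2 : ℝ) : ℂ) • ⟪ξ, ξ⟫_A := by
          rw [hexp, cmplx_smul_real, cmplx_smul_real]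
          module
  constructor
  · have h := hfin 1 (Or.inl rfl)
    rwa [one_mul] at h
  · have h := hfin (-1) (Or.inr rfl)
    rw [neg_mul, one_mul, neg_smul] at h
    exact h


end UnboundedOperator

end
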